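/- arXiv:2507.05905 — 4 statements merged into one kernel-verified Lean document; each statement's English description precedes it below -/
import Mathlib

section
/- For every nonzero integer n, the set of pairs (v₁, v₂) of primitive vectors in ℤ² with det(v₁, v₂) = n is the disjoint union, over ℓ with 1 ≤ ℓ ≤ |n| and gcd(ℓ, n) = 1, of the SL₂(ℤ)-orbits of the matrices with columns (1,0) and (ℓ, n). -/
/-- For `n ≠ 0`, the set of `2×2` integer matrices with both columns primitive and
determinant `n` is the disjoint union over `1 ≤ ℓ ≤ |n|`, `gcd(ℓ, n) = 1`, of the
`SL₂(ℤ)`-orbits of `[[1, ℓ], [0, n]]`. -/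
theorem stmt9 (n : ℤ) (hn : n ≠ 0) :
    ({A : Matrix (Fin 2) (Fin 2) ℤ |
        Int.gcd (A 0 0) (A 1 0) = 1 ∧ Int.gcd (A 0 1) (A 1 1) = 1 ∧ A.det = n}
      = ⋃ ℓ ∈ {ℓ : ℤ | 1 ≤ ℓ ∧ ℓ ≤ |n| ∧ Int.gcd ℓ n = 1},
        {A : Matrix (Fin 2) (Fin 2) ℤ |
          ∃ γ : Matrix.SpecialLinearGroup (Fin 2) ℤ,
            A = (γ : Matrix (Fin 2) (Fin 2) ℤ) * !![1, ℓ; 0, n]}) ∧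
    (∀ ℓ₁ ∈ {ℓ : ℤ | 1 ≤ ℓ ∧ ℓ ≤ |n| ∧ Int.gcd ℓ n = 1},
      ∀ ℓ₂ ∈ {ℓ : ℤ | 1 ≤ ℓ ∧ ℓ ≤ |n| ∧ Int.gcd ℓ n = 1}, ℓ₁ ≠ ℓ₂ →
        Disjoint
          {A : Matrix (Fin 2) (Fin 2) ℤ |
            ∃ γ : Matrix.SpecialLinearGroup (Fin 2) ℤ,
              A = (γ : Matrix (Fin 2) (Fin 2) ℤ) * !![1, ℓ₁; 0, n]}
          {A : Matrix (Fin 2) (Fin 2) ℤ |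
            ∃ γ : Matrix.SpecialLinearGroup (Fin 2) ℤ,
              A = (γ : Matrix (Fin 2) (Fin 2) ℤ) * !![1, ℓ₂; 0, n]}) := by
  have habs : 0 < |n| := abs_pos.mpr hn
  constructor
  · ext A
    simp only [Set.mem_setOf_eq, Set.mem_iUnion, exists_prop]
    constructor
    · rintro ⟨h1, h2, hdet⟩
      set a := A 0 0 with ha; set b := A 0 1 with hb0
      set c := A 1 0 with hc; set d := A 1 1 with hd0
      rw [Matrix.det_fin_two] at hdet
      -- hdet : a * d - b * c = n
      set p := Int.gcdA a c with hp
      set q := Int.gcdB a c with hq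
      have hbez : a * p + c * q = 1 := by
        have := Int.gcd_eq_gcd_ab a c
        rw [h1] at this; push_cast at this; linarith [this]
      set b' : ℤ := p * b + q * d with hb'
      have hbe : b = a * b' - q * n := by rw [hb']; linear_combination (-b) * hbez - q * hdet
      have hde : d = c * b' + p * n := by rw [hb']; linear_combination (-d) * hbez + p * hdet
      -- choose ℓ ≡ b' mod n with 1 ≤ ℓ ≤ |n|
      set q0 : ℤ := (b' - 1) / |n| with hq0
      set ℓ : ℤ := (b' - 1) % |n| + 1 with hl
      set k : ℤ := n.sign * q0 with hk
      have hnk : n * k = |n| * q0 := by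
        rw [hk, ← mul_assoc, Int.mul_sign_self, Int.abs_eq_natAbs]
      have hbl : b' = ℓ + n * k := by
        rw [hl, hnk, hq0]
        have := Int.mul_ediv_add_emod (b' - 1) |n|
        linarith
      have hl1 : 1 ≤ ℓ := by
        have := Int.emod_nonneg (b' - 1) (ne_of_gt habs)
        omega
      have hl2 : ℓ ≤ |n| := by
        have := Int.emod_lt_of_pos (b' - 1) habs
        omega
      have hcop : IsCoprime b' n := by
        have h2' : IsCoprime b d := Int.isCoprime_iff_gcd_eq_one.mpr h2
        obtain ⟨u, v, huv⟩ := h2'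
        exact ⟨u * a + v * c, v * p - u * q, by
          rw [hbe, hde] at huv; linear_combination huv⟩
      have hcopl : Int.gcd ℓ n = 1 := by
        rw [← Int.isCoprime_iff_gcd_eq_one]
        have : IsCoprime (b' + n * (-k)) n := hcop.add_mul_left_left (-k)
        have heq : ℓ = b' + n * (-k) := by rw [hbl]; ring
        rwa [heq]
      refine ⟨ℓ, ⟨hl1, hl2, hcopl⟩, ⟨!![a, k * a - q; c, k * c + p], ?_⟩, ?_⟩
      · rw [Matrix.det_fin_two_of]; linear_combination hbez
      · ext i j
        fin_cases i <;> fin_cases j <;>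
          simp [Matrix.mul_apply, Fin.sum_univ_two, ← ha, ← hb0, ← hc, ← hd0]
        · rw [hbe, hbl]; ring
        · rw [hde, hbl]; ring
    · rintro ⟨ℓ, ⟨hl1, hl2, hgcd⟩, γ, rfl⟩
      have hg : γ.1 0 0 * γ.1 1 1 - γ.1 0 1 * γ.1 1 0 = 1 := by
        have := γ.2; rwa [Matrix.det_fin_two] at this
      have e00 : ((γ : Matrix (Fin 2) (Fin 2) ℤ) * !![1, ℓ; 0, n]) 0 0 = γ.1 0 0 := by
        simp [Matrix.mul_apply, Fin.sum_univ_two]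
      have e10 : ((γ : Matrix (Fin 2) (Fin 2) ℤ) * !![1, ℓ; 0, n]) 1 0 = γ.1 1 0 := by
        simp [Matrix.mul_apply, Fin.sum_univ_two]
      have e01 : ((γ : Matrix (Fin 2) (Fin 2) ℤ) * !![1, ℓ; 0, n]) 0 1
          = γ.1 0 0 * ℓ + γ.1 0 1 * n := by
        simp [Matrix.mul_apply, Fin.sum_univ_two]
      have e11 : ((γ : Matrix (Fin 2) (Fin 2) ℤ) * !![1, ℓ; 0, n]) 1 1
          = γ.1 1 0 * ℓ + γ.1 1 1 * n := by
        simp [Matrix.mul_apply, Fin.sum_univ_two]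
      refine ⟨?_, ?_, ?_⟩
      · rw [e00, e10, ← Int.isCoprime_iff_gcd_eq_one]
        exact ⟨γ.1 1 1, -γ.1 0 1, by linear_combination hg⟩
      · rw [e01, e11, ← Int.isCoprime_iff_gcd_eq_one]
        obtain ⟨u, v, huv⟩ := Int.isCoprime_iff_gcd_eq_one.mpr hgcd
        exact ⟨u * γ.1 1 1 - v * γ.1 1 0, v * γ.1 0 0 - u * γ.1 0 1, by
          linear_combination huv + (u * ℓ + v * n) * hg⟩
      · rw [Matrix.det_mul, γ.2, one_mul, Matrix.det_fin_two_of]; ring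
  · rintro ℓ₁ ⟨h11, h12, h13⟩ ℓ₂ ⟨h21, h22, h23⟩ hne
    rw [Set.disjoint_left]
    rintro A ⟨γ₁, rfl⟩ ⟨γ₂, heq⟩
    have key : ∀ i j, ((γ₁ : Matrix (Fin 2) (Fin 2) ℤ) * !![1, ℓ₁; 0, n]) i j
        = ((γ₂ : Matrix (Fin 2) (Fin 2) ℤ) * !![1, ℓ₂; 0, n]) i j := fun i j => by rw [heq]
    have k00 := key 0 0; have k10 := key 1 0; have k01 := key 0 1; have k11 := key 1 1
    simp [Matrix.mul_apply, Fin.sum_univ_two] at k00 k10 k01 k11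
    have hg : γ₁.1 0 0 * γ₁.1 1 1 - γ₁.1 0 1 * γ₁.1 1 0 = 1 := by
      have := γ₁.2; rwa [Matrix.det_fin_two] at this
    have hdvd : n ∣ ℓ₁ - ℓ₂ := by
      refine ⟨γ₁.1 1 1 * (γ₂.1 0 1 - γ₁.1 0 1) - γ₁.1 0 1 * (γ₂.1 1 1 - γ₁.1 1 1), ?_⟩
      linear_combination γ₁.1 1 1 * k01 - γ₁.1 0 1 * k11 - (ℓ₁ - ℓ₂) * hg
        - ℓ₂ * γ₁.1 1 1 * k00 + ℓ₂ * γ₁.1 0 1 * k10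
    have hne' : ℓ₁ - ℓ₂ ≠ 0 := sub_ne_zero.mpr hne
    have hle : |n| ≤ |ℓ₁ - ℓ₂| :=
      Int.le_of_dvd (abs_pos.mpr hne') ((abs_dvd _ _).mpr ((dvd_abs _ _).mpr hdvd))
    have hlt : |ℓ₁ - ℓ₂| < |n| := by rw [abs_sub_lt_iff]; omega
    exact absurd hle (not_le.mpr hlt)
end

section
/- Let N ≥ 2 and fix a congruence class v₀ ∈ ℤ² with gcd(v₀, N) = 1. For n a nonzero multiple of N, the set D_n = {(v₁, v₂) : v₁, v₂ primitive in ℤ², v₁ ≡ v₂ ≡ v₀ (mod N), det(v₁,v₂) = n} decomposes into exactly N·φ(n)/φ(N) orbits under the principal congruence subgroup Γ(N). -/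
open Matrix

/-- The set of pairs `(v₁, v₂)` of primitive vectors, both congruent to `v₀` mod `N`,
with `det(v₁, v₂) = n`, encoded as `2×2` matrices with columns `v₁, v₂`. -/
def Dset (N : ℕ) (v₀ : Fin 2 → ℤ) (n : ℤ) : Set (Matrix (Fin 2) (Fin 2) ℤ) :=
  {A | Int.gcd (A 0 0) (A 1 0) = 1 ∧ Int.gcd (A 0 1) (A 1 1) = 1 ∧
    (∀ i, A i 0 ≡ v₀ i [ZMOD (N : ℤ)]) ∧ (∀ i, A i 1 ≡ v₀ i [ZMOD (N : ℤ)]) ∧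
    A.det = n}

/-- The relation identifying two elements in the same `Γ(N)`-orbit. -/
def gammaRel (N : ℕ) (v₀ : Fin 2 → ℤ) (n : ℤ) :
    Dset N v₀ n → Dset N v₀ n → Prop :=
  fun A B => ∃ γ : Matrix.SpecialLinearGroup (Fin 2) ℤ, γ ∈ CongruenceSubgroup.Gamma N ∧
    (B : Matrix (Fin 2) (Fin 2) ℤ) = (γ : Matrix (Fin 2) (Fin 2) ℤ) * (A : Matrix (Fin 2) (Fin 2) ℤ)

local notation "SL2" => Matrix.SpecialLinearGroup (Fin 2) ℤ
local notation "M2" => Matrix (Fin 2) (Fin 2) ℤ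

section Aux

private lemma totient_mul_dvd : ∀ N m : ℕ, 0 < m → N ∣ m → (m * N).totient = N * m.totient := by
  intro N
  induction N using Nat.strong_induction_on with
  | _ N ih =>
    intro m hm hNm
    rcases eq_or_ne N 1 with rfl | hN1
    · simp
    rcases eq_or_ne N 0 with rfl | hN0
    · exact absurd (zero_dvd_iff.mp hNm) hm.ne'
    obtain ⟨p, hp, N', rfl⟩ : ∃ p, p.Prime ∧ ∃ N', N = p * N' := by
      obtain ⟨p, hp, hpd⟩ := Nat.exists_prime_and_dvd hN1
      exact ⟨p, hp, hpd⟩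
    have hN' : N' ≠ 0 := by rintro rfl; simp at hN0
    have hN'lt : N' < p * N' := by
      have h2 := hp.two_le
      have := Nat.pos_of_ne_zero hN'
      nlinarith
    have hpm : p ∣ m * N' :=
      dvd_mul_of_dvd_left (dvd_trans (dvd_mul_right p N') hNm) _
    have h1 : m * (p * N') = p * (m * N') := by ring
    rw [h1, Nat.totient_mul_of_prime_of_dvd hp hpm,
      ih N' hN'lt m hm (dvd_trans (dvd_mul_left N' p) hNm)]
    ring

private lemma card_T (m N : ℕ) (hm : 0 < m) (hN : 0 < N) (hNm : N ∣ m) :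
    Nat.card {c : ZMod (m * N) // IsUnit c ∧ ZMod.castHom (dvd_mul_left N m) (ZMod N) c = 1}
      * N.totient = N * m.totient := by
  have hmN : NeZero (m * N) := ⟨by positivity⟩
  have hN0 : NeZero N := ⟨hN.ne'⟩
  set f := ZMod.unitsMap (dvd_mul_left N m) with hf
  have hsurj : Function.Surjective f := ZMod.unitsMap_surjective _
  have e1 : {c : ZMod (m * N) // IsUnit c ∧ ZMod.castHom (dvd_mul_left N m) (ZMod N) c = 1}
      ≃ f.ker := by
    refine ⟨fun t => ⟨t.2.1.unit, ?_⟩, fun k => ⟨k.1.1, k.1.isUnit, ?_⟩, fun t => ?_, fun k => ?_⟩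
    · ext
      simpa [hf, ZMod.unitsMap_def] using t.2.2
    · have := congrArg Units.val k.2
      simpa [hf, ZMod.unitsMap_def] using this
    · exact Subtype.ext rfl
    · exact Subtype.ext (Units.ext rfl)
  have h2 : Nat.card ((ZMod (m * N))ˣ) = Nat.card ((ZMod N)ˣ) * Nat.card f.ker := by
    rw [Subgroup.card_eq_card_quotient_mul_card_subgroup f.ker]
    congr 1
    exact Nat.card_congr (QuotientGroup.quotientKerEquivOfSurjective f hsurj).toEquiv
  have hu1 : Nat.card ((ZMod (m * N))ˣ) = (m * N).totient := by
    rw [Nat.card_eq_fintype_card, ZMod.card_units_eq_totient]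
  have hu2 : Nat.card ((ZMod N)ˣ) = N.totient := by
    rw [Nat.card_eq_fintype_card, ZMod.card_units_eq_totient]
  rw [Nat.card_congr e1, ← totient_mul_dvd N m hm hNm, ← hu1, h2, hu2]
  ring

private lemma mul2 (B A : M2) (i j : Fin 2) :
    (B * A) i j = B i 0 * A 0 j + B i 1 * A 1 j := by
  rw [Matrix.mul_apply, Fin.sum_univ_two]

private lemma gcd_lin {p q r s a b : ℤ} (hdet : p * s - q * r = 1) (h : Int.gcd a b = 1) :
    Int.gcd (p * a + q * b) (r * a + s * b) = 1 := by
  set c := p * a + q * b with hc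
  set d := r * a + s * b with hd
  have key1 : s * c - q * d = a := by rw [hc, hd]; linear_combination a * hdet
  have key2 : p * d - r * c = b := by rw [hc, hd]; linear_combination b * hdet
  have h1 : (Int.gcd c d : ℤ) ∣ a :=
    key1 ▸ dvd_sub ((Int.gcd_dvd_left c d).mul_left s) ((Int.gcd_dvd_right c d).mul_left q)
  have h2 : (Int.gcd c d : ℤ) ∣ b :=
    key2 ▸ dvd_sub ((Int.gcd_dvd_right c d).mul_left p) ((Int.gcd_dvd_left c d).mul_left r)
  have h3 : (Int.gcd c d : ℤ) ∣ (Int.gcd a b : ℤ) := Int.dvd_coe_gcd h1 h2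
  rw [h] at h3
  exact Nat.dvd_one.mp (Int.natCast_dvd_natCast.mp (by exact_mod_cast h3))

private def mk2 (a b c d : ℤ) (h : a * d - b * c = 1) : SL2 :=
  ⟨!![a, b; c, d], by rw [Matrix.det_fin_two_of]; exact h⟩

private lemma zmod_of (N : ℕ) {a b : ℤ} (h : a ≡ b [ZMOD (N : ℤ)]) :
    ((a : ZMod N)) = (b : ZMod N) := (ZMod.intCast_eq_intCast_iff a b N).mpr h

private lemma of_zmod (N : ℕ) {a b : ℤ} (h : ((a : ZMod N)) = (b : ZMod N)) :
    a ≡ b [ZMOD (N : ℤ)] := (ZMod.intCast_eq_intCast_iff a b N).mp h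

private lemma gamma_mem' {N : ℕ} (γ : SL2) (h : γ ∈ CongruenceSubgroup.Gamma N) :
    (((γ : M2) 0 0 : ZMod N)) = 1 ∧ (((γ : M2) 0 1 : ZMod N)) = 0 ∧
    (((γ : M2) 1 0 : ZMod N)) = 0 ∧ (((γ : M2) 1 1 : ZMod N)) = 1 := by
  rwa [CongruenceSubgroup.Gamma_mem] at h

private lemma mem_gamma {N : ℕ} (γ : SL2)
    (h1 : (((γ : M2) 0 0 : ZMod N)) = 1) (h2 : (((γ : M2) 0 1 : ZMod N)) = 0)
    (h3 : (((γ : M2) 1 0 : ZMod N)) = 0) (h4 : (((γ : M2) 1 1 : ZMod N)) = 1) :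
    γ ∈ CongruenceSubgroup.Gamma N := by
  rw [CongruenceSubgroup.Gamma_mem]; exact ⟨h1, h2, h3, h4⟩

private lemma exists_lift (N : ℕ) (hN : 2 ≤ N) (a b : ℤ)
    (h : Nat.gcd (Int.gcd a b) N = 1) :
    ∃ α β : ℤ, Int.gcd α β = 1 ∧ α ≡ a [ZMOD (N : ℤ)] ∧ β ≡ b [ZMOD (N : ℤ)] := by
  have hD : 0 < Int.gcd a b := by
    rcases Nat.eq_zero_or_pos (Int.gcd a b) with h0 | h0
    · rw [h0, Nat.gcd_zero_left] at h; omega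
    · exact h0
  obtain ⟨g, a', b', hg, hab, ha, hb⟩ := Int.exists_gcd_one' hD
  set u := Int.gcdA a' b' with hu
  set v := Int.gcdB a' b' with hv
  have hBez : a' * u + b' * v = 1 := by
    rw [hu, hv, ← Int.gcd_eq_gcd_ab, hab]; norm_num
  refine ⟨a - v * N, b + u * N, ?_, ?_, ?_⟩
  · set α := a - v * N with hα
    set β := b + u * N with hβ
    have k1 : u * α + v * β = (g : ℤ) := by
      rw [hα, hβ, ha, hb]; linear_combination (g : ℤ) * hBez
    have k2 : (-b') * α + a' * β = (N : ℤ) := by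
      rw [hα, hβ, ha, hb]; linear_combination (N : ℤ) * hBez
    have d1 : (Int.gcd α β : ℤ) ∣ (g : ℤ) :=
      k1 ▸ dvd_add ((Int.gcd_dvd_left α β).mul_left u) ((Int.gcd_dvd_right α β).mul_left v)
    have d2 : (Int.gcd α β : ℤ) ∣ (N : ℤ) :=
      k2 ▸ dvd_add ((Int.gcd_dvd_left α β).mul_left (-b')) ((Int.gcd_dvd_right α β).mul_left a')
    have dg : (g : ℤ) ∣ (Int.gcd a b : ℤ) :=
      Int.dvd_coe_gcd ⟨a', by rw [ha]; ring⟩ ⟨b', by rw [hb]; ring⟩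
    have e1 : Int.gcd α β ∣ Int.gcd a b :=
      Int.natCast_dvd_natCast.mp (dvd_trans d1 dg)
    have e2 : Int.gcd α β ∣ N := Int.natCast_dvd_natCast.mp d2
    have := Nat.dvd_gcd e1 e2
    rw [h] at this
    exact Nat.dvd_one.mp this
  · exact (Int.modEq_iff_dvd.mpr ⟨-v, by ring⟩).symm
  · exact (Int.modEq_iff_dvd.mpr ⟨u, by ring⟩).symm

private lemma orbit_rep {N : ℕ} {n : ℤ} (A : M2)
    (hc1 : Int.gcd (A 0 0) (A 1 0) = 1)
    (hc2 : Int.gcd (A 0 1) (A 1 1) = 1)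
    (h00 : ((A 0 0 : ZMod N)) = 1) (h10 : ((A 1 0 : ZMod N)) = 0)
    (h01 : ((A 0 1 : ZMod N)) = 1) (h11 : ((A 1 1 : ZMod N)) = 0)
    (hdet : A.det = n) :
    ∃ (x : ℤ) (γ : SL2), γ ∈ CongruenceSubgroup.Gamma N ∧
      (γ : M2) * A = !![1, x; 0, n] ∧ ((x : ZMod N)) = 1 ∧ Int.gcd x n = 1 := by
  set a := A 0 0 with ha
  set b := A 1 0 with hb
  set p0 := Int.gcdA a b with hp0
  set q0 := Int.gcdB a b with hq0
  have hBez : a * p0 + b * q0 = 1 := by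
    rw [hp0, hq0, ← Int.gcd_eq_gcd_ab, hc1]; norm_num
  set p := p0 + q0 * b with hp
  set q := q0 - q0 * a with hq
  have hdetγ : p * a - q * (-b) = 1 := by rw [hp, hq]; linear_combination hBez
  set γ := mk2 p q (-b) a hdetγ with hγ
  have hγc : (γ : M2) = !![p, q; -b, a] := rfl
  have hp0N : ((p0 : ZMod N)) = 1 := by
    have := congrArg (fun z : ℤ => ((z : ZMod N))) hBez
    push_cast at this
    rw [h00, h10] at this
    simpa using this
  have hpN : ((p : ZMod N)) = 1 := by
    rw [hp]; push_cast; rw [hp0N, h10]; ring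
  have hqN : ((q : ZMod N)) = 0 := by
    rw [hq]; push_cast; rw [h00]; ring
  have hmem : γ ∈ CongruenceSubgroup.Gamma N := by
    refine mem_gamma γ ?_ ?_ ?_ ?_ <;> rw [hγc]
    · simpa using hpN
    · simpa using hqN
    · push_cast; simpa using h10
    · simpa using h00
  set B := (γ : M2) * A with hB
  have e00 : B 0 0 = 1 := by
    rw [hB, mul2, hγc]; simp; linear_combination hBez
  have e10 : B 1 0 = 0 := by
    rw [hB, mul2, hγc]; simp; ring
  have hdetB : B.det = n := by
    rw [hB, Matrix.det_mul, γ.prop, one_mul, hdet]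
  have e11 : B 1 1 = n := by
    have := Matrix.det_fin_two B
    rw [hdetB, e00, e10] at this
    linarith [this]
  set x := B 0 1 with hx
  refine ⟨x, γ, hmem, ?_, ?_, ?_⟩
  · ext i j
    fin_cases i <;> fin_cases j <;>
      simp only [Matrix.cons_val', Matrix.cons_val_zero, Matrix.cons_val_one, Matrix.head_cons,
        Matrix.empty_val', Matrix.cons_val_fin_one, Matrix.head_fin_const, Matrix.of_apply]
    · exact e00
    · exact hx.symm ▸ rfl
    · exact e10
    · exact e11
  · have hx2 : x = p * A 0 1 + q * A 1 1 := by rw [hx, hB, mul2, hγc]; simp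
    rw [hx2]; push_cast; rw [hpN, hqN, h01, h11]; ring
  · have hx2 : x = p * A 0 1 + q * A 1 1 := by rw [hx, hB, mul2, hγc]; simp
    have hy2 : (n : ℤ) = (-b) * A 0 1 + a * A 1 1 := by
      rw [← e11, hB, mul2, hγc]; simp
    rw [hx2, hy2]
    exact gcd_lin hdetγ hc2

private lemma rel_equivalence (N : ℕ) (v₀ : Fin 2 → ℤ) (n : ℤ) :
    Equivalence (gammaRel N v₀ n) := by
  constructor
  · intro A
    exact ⟨1, Subgroup.one_mem _, by
      rw [Matrix.SpecialLinearGroup.coe_one, one_mul]⟩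
  · rintro A B ⟨γ, hγ, hBA⟩
    exact ⟨γ⁻¹, Subgroup.inv_mem _ hγ, by
      rw [hBA, ← mul_assoc, ← Matrix.SpecialLinearGroup.coe_mul, inv_mul_cancel,
        Matrix.SpecialLinearGroup.coe_one, one_mul]⟩
  · rintro A B C ⟨γ₁, hγ₁, hBA⟩ ⟨γ₂, hγ₂, hCB⟩
    exact ⟨γ₂ * γ₁, Subgroup.mul_mem _ hγ₂ hγ₁, by
      rw [hCB, hBA, Matrix.SpecialLinearGroup.coe_mul, mul_assoc]⟩

private lemma isUnit_intCast {k : ℕ} {x : ℤ} (h : IsCoprime x (k : ℤ)) :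
    IsUnit ((x : ZMod k)) := by
  obtain ⟨u, v, huv⟩ := h
  have := congrArg (fun z : ℤ => ((z : ZMod k))) huv
  push_cast at this
  rw [ZMod.natCast_self] at this
  exact IsUnit.of_mul_eq_one (u : ZMod k) (by linear_combination this)

end Aux
/-- For `N ≥ 2`, `gcd(v₀, N) = 1`, and `n` a nonzero multiple of `N`, the set `D_n`
decomposes into exactly `N·φ(n)/φ(N)` orbits under `Γ(N)`. -/
theorem stmt10 (N : ℕ) (hN : 2 ≤ N) (v₀ : Fin 2 → ℤ)
    (hv₀ : Nat.gcd (Int.gcd (v₀ 0) (v₀ 1)) N = 1)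
    (n : ℤ) (hn : n ≠ 0) (hNn : (N : ℤ) ∣ n) :
    Nat.card (Quot (gammaRel N v₀ n)) * Nat.totient N = N * Nat.totient n.natAbs := by
  classical
  set m := n.natAbs with hm'
  have hm : 0 < m := Int.natAbs_pos.mpr hn
  have hNpos : 0 < N := by omega
  haveI : NeZero (m * N) := ⟨by positivity⟩
  haveI : NeZero N := ⟨hNpos.ne'⟩
  have hNm : N ∣ m := by
    have := Int.natAbs_dvd_natAbs.mpr hNn
    simpa using this
  have hnz : ((n : ZMod N)) = 0 := by
    rw [ZMod.intCast_zmod_eq_zero_iff_dvd]; exact hNn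
  -- primitive lift of v₀
  obtain ⟨α, β, hwgcd, hwa, hwb⟩ := exists_lift N hN (v₀ 0) (v₀ 1) hv₀
  have hαz : ((α : ZMod N)) = ((v₀ 0 : ZMod N)) := zmod_of N hwa
  have hβz : ((β : ZMod N)) = ((v₀ 1 : ZMod N)) := zmod_of N hwb
  -- Bezout for (α, β) and basepoint matrices
  set P := Int.gcdA α β with hP
  set Q := Int.gcdB α β with hQ
  have hPQ : α * P + β * Q = 1 := by rw [hP, hQ, ← Int.gcd_eq_gcd_ab, hwgcd]; norm_num
  have hPQz : (α : ZMod N) * (P : ZMod N) + (β : ZMod N) * (Q : ZMod N) = 1 := by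
    have := congrArg (fun z : ℤ => ((z : ZMod N))) hPQ
    push_cast at this
    simpa using this
  have hdetg : P * α - Q * (-β) = 1 := by linear_combination hPQ
  have hdetgi : α * P - (-Q) * β = 1 := by linear_combination hPQ
  set g : SL2 := mk2 P Q (-β) α hdetg with hg
  set gi : SL2 := mk2 α (-Q) β P hdetgi with hgi
  have hgc : (g : M2) = !![P, Q; -β, α] := rfl
  have hgic : (gi : M2) = !![α, -Q; β, P] := rfl
  have hgig : gi * g = 1 := by
    apply Subtype.ext
    show (gi : M2) * (g : M2) = ((1 : SL2) : M2)
    rw [Matrix.SpecialLinearGroup.coe_one, hgic, hgc]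
    ext i j
    rw [mul2]
    fin_cases i <;> fin_cases j <;> simp <;> first | (ring1) | (linear_combination hPQ)
  have hggi : g * gi = 1 := by
    apply Subtype.ext
    show (g : M2) * (gi : M2) = ((1 : SL2) : M2)
    rw [Matrix.SpecialLinearGroup.coe_one, hgic, hgc]
    ext i j
    rw [mul2]
    fin_cases i <;> fin_cases j <;> simp <;> first | (ring1) | (linear_combination hPQ)
  have hgiinv : gi = g⁻¹ := eq_inv_of_mul_eq_one_left hgig
  have hginv : g = gi⁻¹ := eq_inv_of_mul_eq_one_left hggi
  have hgimul : (gi : M2) * (g : M2) = 1 := by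
    rw [← Matrix.SpecialLinearGroup.coe_mul, hgig, Matrix.SpecialLinearGroup.coe_one]
  have hgmul : (g : M2) * (gi : M2) = 1 := by
    rw [← Matrix.SpecialLinearGroup.coe_mul, hggi, Matrix.SpecialLinearGroup.coe_one]
  -- the normal form matrices
  set R : ℤ → M2 := fun x => !![1, x; 0, n] with hR
  set W : ℤ → M2 := fun x => (gi : M2) * R x with hW
  have hRx : ∀ x : ℤ, R x = !![1, x; 0, n] := fun _ => rfl
  have hWx : ∀ x : ℤ, W x = (gi : M2) * R x := fun _ => rfl
  -- membership of normal forms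
  have memW : ∀ x : ℤ, ((x : ZMod N)) = 1 → Int.gcd x n = 1 → W x ∈ Dset N v₀ n := by
    intro x hx1 hxn
    have e00 : W x 0 0 = α := by rw [hWx, mul2, hgic, hRx]; simp
    have e10 : W x 1 0 = β := by rw [hWx, mul2, hgic, hRx]; simp
    have e01 : W x 0 1 = α * x + -Q * n := by rw [hWx, mul2, hgic, hRx]; simp
    have e11 : W x 1 1 = β * x + P * n := by rw [hWx, mul2, hgic, hRx]; simp
    refine ⟨?_, ?_, ?_, ?_, ?_⟩
    · rw [e00, e10]; exact hwgcd
    · rw [e01, e11]; exact gcd_lin hdetgi hxn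
    · rw [Fin.forall_fin_two]
      constructor
      · rw [e00]; exact hwa
      · rw [e10]; exact hwb
    · rw [Fin.forall_fin_two]
      constructor
      · refine of_zmod N ?_
        rw [e01, ← hαz]
        push_cast
        rw [hx1, hnz]
        ring
      · refine of_zmod N ?_
        rw [e11, ← hβz]
        push_cast
        rw [hx1, hnz]
        ring
    · rw [hWx, Matrix.det_mul, gi.prop, one_mul, hRx, Matrix.det_fin_two_of]
      ring
  -- forward: related normal forms have congruent parameters
  have relWW : ∀ x y : ℤ, ∀ hx : W x ∈ Dset N v₀ n, ∀ hy : W y ∈ Dset N v₀ n,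
      gammaRel N v₀ n ⟨W x, hx⟩ ⟨W y, hy⟩ → ((N : ℤ) * n) ∣ (y - x) := by
    rintro x y hx hy ⟨δ, hδ, hE⟩
    have hεmem : g * δ * gi ∈ CongruenceSubgroup.Gamma N := by
      rw [hgiinv]
      exact (CongruenceSubgroup.Gamma_normal N).conj_mem δ hδ g
    have hE' : W y = (δ : M2) * W x := hE
    have hmat : ((g * δ * gi : SL2) : M2) * R x = R y := by
      rw [Matrix.SpecialLinearGroup.coe_mul, Matrix.SpecialLinearGroup.coe_mul]
      calc (g : M2) * (δ : M2) * (gi : M2) * R x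
          = (g : M2) * ((δ : M2) * ((gi : M2) * R x)) := by
            simp only [mul_assoc]
        _ = (g : M2) * ((δ : M2) * W x) := by rw [← hWx]
        _ = (g : M2) * W y := by rw [← hE']
        _ = ((g : M2) * (gi : M2)) * R y := by rw [hWx, mul_assoc]
        _ = R y := by rw [hgmul, one_mul]
    set ε := g * δ * gi with hε
    have h00 := congrFun (congrFun hmat 0) 0
    have h01 := congrFun (congrFun hmat 0) 1
    rw [mul2] at h00 h01
    rw [hRx, hRx] at h00 h01
    simp at h00 h01
    obtain ⟨-, he01, -, -⟩ := gamma_mem' ε hεmem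
    rw [ZMod.intCast_zmod_eq_zero_iff_dvd] at he01
    obtain ⟨k, hk⟩ := he01
    refine ⟨k, ?_⟩
    rw [← h01, h00, hk]
    ring
  -- backward: congruent parameters give related normal forms
  have relWW' : ∀ x y : ℤ, ∀ hx : W x ∈ Dset N v₀ n, ∀ hy : W y ∈ Dset N v₀ n,
      ((N : ℤ) * n) ∣ (y - x) → gammaRel N v₀ n ⟨W x, hx⟩ ⟨W y, hy⟩ := by
    rintro x y hx hy ⟨k, hk⟩
    have hdetδ : (1 : ℤ) * 1 - (N * k) * 0 = 1 := by ring
    set δ := mk2 1 (N * k) 0 1 hdetδ with hδ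
    have hδc : (δ : M2) = !![1, N * k; 0, 1] := rfl
    have hδmem : δ ∈ CongruenceSubgroup.Gamma N := by
      refine mem_gamma δ ?_ ?_ ?_ ?_ <;> rw [hδc] <;> push_cast <;>
        simp [ZMod.natCast_self]
    refine ⟨gi * δ * g, ?_, ?_⟩
    · rw [hginv]
      exact (CongruenceSubgroup.Gamma_normal N).conj_mem δ hδmem gi
    · show W y = ((gi * δ * g : SL2) : M2) * W x
      rw [Matrix.SpecialLinearGroup.coe_mul, Matrix.SpecialLinearGroup.coe_mul]
      have hδR : (δ : M2) * R x = R y := by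
        rw [hδc, hRx, hRx]
        ext i j
        rw [mul2]
        fin_cases i <;> fin_cases j <;> simp <;> linarith [hk]
      calc W y = (gi : M2) * ((δ : M2) * R x) := by rw [hWx, hδR]
        _ = (gi : M2) * ((δ : M2) * (((g : M2) * (gi : M2)) * R x)) := by
            rw [hgmul, one_mul]
        _ = (gi : M2) * (δ : M2) * (g : M2) * ((gi : M2) * R x) := by
            simp only [mul_assoc]
        _ = (gi : M2) * (δ : M2) * (g : M2) * W x := by rw [← hWx]
  -- every element is related to a normal form
  have toW : ∀ A : Dset N v₀ n, ∃ x : ℤ, ((x : ZMod N)) = 1 ∧ Int.gcd x n = 1 ∧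
      ∀ hx : W x ∈ Dset N v₀ n, gammaRel N v₀ n A ⟨W x, hx⟩ := by
    rintro ⟨A, hA1, hA2, hA3, hA4, hA5⟩
    set B := (g : M2) * A with hB
    have hA00 : ((A 0 0 : ZMod N)) = (α : ZMod N) := by
      rw [zmod_of N (hA3 0), hαz]
    have hA10 : ((A 1 0 : ZMod N)) = (β : ZMod N) := by
      rw [zmod_of N (hA3 1), hβz]
    have hA01 : ((A 0 1 : ZMod N)) = (α : ZMod N) := by
      rw [zmod_of N (hA4 0), hαz]
    have hA11 : ((A 1 1 : ZMod N)) = (β : ZMod N) := by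
      rw [zmod_of N (hA4 1), hβz]
    have b00 : B 0 0 = P * A 0 0 + Q * A 1 0 := by rw [hB, mul2, hgc]; simp
    have b10 : B 1 0 = -β * A 0 0 + α * A 1 0 := by rw [hB, mul2, hgc]; simp
    have b01 : B 0 1 = P * A 0 1 + Q * A 1 1 := by rw [hB, mul2, hgc]; simp
    have b11 : B 1 1 = -β * A 0 1 + α * A 1 1 := by rw [hB, mul2, hgc]; simp
    obtain ⟨x, γ, hγ, hmat, hx1, hxn⟩ := orbit_rep (N := N) (n := n) B
      (by rw [b00, b10]; exact gcd_lin hdetg hA1)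
      (by rw [b01, b11]; exact gcd_lin hdetg hA2)
      (by rw [b00]; push_cast; rw [hA00, hA10]; linear_combination hPQz)
      (by rw [b10]; push_cast; rw [hA00, hA10]; ring)
      (by rw [b01]; push_cast; rw [hA01, hA11]; linear_combination hPQz)
      (by rw [b11]; push_cast; rw [hA01, hA11]; ring)
      (by rw [hB, Matrix.det_mul, g.prop, one_mul, hA5])
    refine ⟨x, hx1, hxn, fun hx => ⟨gi * γ * g, ?_, ?_⟩⟩
    · rw [hginv]
      exact (CongruenceSubgroup.Gamma_normal N).conj_mem γ hγ gi
    · show W x = ((gi * γ * g : SL2) : M2) * A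
      rw [Matrix.SpecialLinearGroup.coe_mul, Matrix.SpecialLinearGroup.coe_mul]
      calc W x = (gi : M2) * ((γ : M2) * B) := by rw [hWx, hmat, hRx]
        _ = (gi : M2) * ((γ : M2) * ((g : M2) * A)) := by rw [← hB]
        _ = (gi : M2) * (γ : M2) * (g : M2) * A := by simp only [mul_assoc]
  -- the parameter space
  set T := {c : ZMod (m * N) // IsUnit c ∧ ZMod.castHom (dvd_mul_left N m) (ZMod N) c = 1}
    with hT
  have hval1 : ∀ c : ZMod (m * N), ZMod.castHom (dvd_mul_left N m) (ZMod N) c = 1 →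
      (((c.val : ℤ) : ZMod N)) = 1 := by
    intro c hc
    rw [Int.cast_natCast, ZMod.natCast_val, ← ZMod.castHom_apply (h := dvd_mul_left N m)]
    exact hc
  have hval2 : ∀ c : ZMod (m * N), IsUnit c → Int.gcd ((c.val : ℤ)) n = 1 := by
    intro c hc
    have hc' : IsUnit (((c.val : ℕ) : ZMod (m * N))) := by
      rw [ZMod.natCast_zmod_val]; exact hc
    rw [ZMod.isUnit_iff_coprime] at hc'
    have h1 : Nat.Coprime c.val m := Nat.Coprime.coprime_dvd_right (dvd_mul_right m N) hc'
    have h2 : Int.gcd ((c.val : ℤ)) n = Nat.gcd c.val m := rfl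
    rw [h2]; exact h1
  set Φ : T → Quot (gammaRel N v₀ n) :=
    fun t => Quot.mk _ ⟨W ((t.1.val : ℤ)), memW _ (hval1 t.1 t.2.2) (hval2 t.1 t.2.1)⟩ with hΦ
  have hNnAbs : ((N : ℤ) * n).natAbs = m * N := by
    rw [Int.natAbs_mul, hm']
    simp [Nat.mul_comm]
  have hbij : Function.Bijective Φ := by
    constructor
    · rintro ⟨c, hc⟩ ⟨c', hc'⟩ heq
      simp only [hΦ] at heq
      have h1 := Quot.eq.mp heq
      have h2 := (rel_equivalence N v₀ n).eqvGen_iff.mp h1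
      have h3 := relWW _ _ _ _ h2
      have h4 : ((m * N : ℕ) : ℤ) ∣ ((c'.val : ℤ) - (c.val : ℤ)) := by
        have h4' := (Int.natAbs_dvd (a := (N : ℤ) * n)).mpr h3
        rwa [hNnAbs] at h4'
      have h5 : (((c.val : ℤ)) : ZMod (m * N)) = (((c'.val : ℤ)) : ZMod (m * N)) :=
        (ZMod.intCast_eq_intCast_iff_dvd_sub _ _ _).mpr h4
      apply Subtype.ext
      rwa [Int.cast_natCast, Int.cast_natCast, ZMod.natCast_zmod_val,
        ZMod.natCast_zmod_val] at h5
    · intro qA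
      induction qA using Quot.ind with
      | _ A =>
        obtain ⟨x, hx1, hxn, hrel⟩ := toW A
        have hcopN : IsCoprime x (N : ℤ) := by
          have h6 : (((1 : ℤ)) : ZMod N) = ((x : ZMod N)) := by rw [hx1]; norm_num
          obtain ⟨k, hk⟩ := (ZMod.intCast_eq_intCast_iff_dvd_sub _ _ _).mp h6
          exact ⟨1, -k, by linear_combination hk⟩
        have hcopm : IsCoprime x ((m : ℕ) : ℤ) := by
          rw [Int.isCoprime_iff_gcd_eq_one]
          have h7 : Int.gcd x ((m : ℕ) : ℤ) = Int.gcd x n := by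
            rw [Int.gcd, Int.gcd, Int.natAbs_natCast, hm']
          rw [h7]; exact hxn
        have hcop : IsCoprime x (((m * N : ℕ)) : ℤ) := by
          push_cast
          exact hcopm.mul_right hcopN
        set c : ZMod (m * N) := ((x : ZMod (m * N))) with hc
        have hcu : IsUnit c := isUnit_intCast hcop
        have hccast : ZMod.castHom (dvd_mul_left N m) (ZMod N) c = 1 := by
          rw [hc, map_intCast]; exact hx1
        refine ⟨⟨c, hcu, hccast⟩, ?_⟩
        have hvalx : ((N : ℤ) * n) ∣ ((c.val : ℤ) - x) := by
          have h8 : (((c.val : ℤ)) : ZMod (m * N)) = ((x : ZMod (m * N))) := by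
            rw [Int.cast_natCast, ZMod.natCast_zmod_val, hc]
          have h9 := (ZMod.intCast_eq_intCast_iff_dvd_sub _ _ _).mp h8.symm
          rw [← Int.natAbs_dvd, hNnAbs]
          exact_mod_cast h9
        have hrel2 := relWW' x ((c.val : ℤ)) (memW _ hx1 hxn)
          (memW _ (hval1 c hccast) (hval2 c hcu)) hvalx
        have hrel3 := (rel_equivalence N v₀ n).trans (hrel (memW _ hx1 hxn)) hrel2
        have hrel4 := (rel_equivalence N v₀ n).symm hrel3
        simp only [hΦ]
        exact Quot.sound hrel4
  have hcard : Nat.card T = Nat.card (Quot (gammaRel N v₀ n)) :=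
    Nat.card_eq_of_bijective Φ hbij
  rw [← hcard]
  exact card_T m N hm hNpos hNm
end

section
/- Let N = 2 and let σ₁, σ₂ be congruence classes of primitive vectors mod 2 (i.e., elements of {(0,1),(1,0),(1,1)}). For a nonzero integer n, there exist primitive vectors v₁ ≡ σ₁ (mod 2) and v₂ ≡ σ₂ (mod 2) with det(v₁,v₂) = n if and only if: σ₁ = σ₂ when n is even (nonzero), and σ₁ ≠ σ₂ when n is odd. -/
lemma gcd_one_of_comb (a b u v : ℤ) (h : u * a + v * b = 1) : Int.gcd a b = 1 := by
  rw [← Int.isCoprime_iff_gcd_eq_one]; exact ⟨u, v, h⟩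

/-- For congruence classes `σ₁, σ₂ ∈ {(0,1),(1,0),(1,1)}` of primitive vectors mod 2 and
nonzero `n`, there exist primitive `v₁ ≡ σ₁`, `v₂ ≡ σ₂ (mod 2)` with `det(v₁,v₂) = n`
iff `σ₁ = σ₂` when `n` is even and `σ₁ ≠ σ₂` when `n` is odd. -/
theorem stmt11 (σ₁ σ₂ : Fin 2 → ℤ)
    (h1 : σ₁ ∈ ({![0, 1], ![1, 0], ![1, 1]} : Set (Fin 2 → ℤ)))
    (h2 : σ₂ ∈ ({![0, 1], ![1, 0], ![1, 1]} : Set (Fin 2 → ℤ)))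
    (n : ℤ) (hn : n ≠ 0) :
    (∃ v₁ v₂ : Fin 2 → ℤ,
        Int.gcd (v₁ 0) (v₁ 1) = 1 ∧ Int.gcd (v₂ 0) (v₂ 1) = 1 ∧
        (∀ i, v₁ i ≡ σ₁ i [ZMOD 2]) ∧ (∀ i, v₂ i ≡ σ₂ i [ZMOD 2]) ∧
        v₁ 0 * v₂ 1 - v₁ 1 * v₂ 0 = n)
      ↔ ((2 ∣ n ∧ σ₁ = σ₂) ∨ (¬ 2 ∣ n ∧ σ₁ ≠ σ₂)) := by
  constructor
  · rintro ⟨v₁, v₂, hg1, hg2, hc1, hc2, hdet⟩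
    have key : v₁ 0 * v₂ 1 - v₁ 1 * v₂ 0 ≡ σ₁ 0 * σ₂ 1 - σ₁ 1 * σ₂ 0 [ZMOD 2] :=
      ((hc1 0).mul (hc2 1)).sub ((hc1 1).mul (hc2 0))
    rw [hdet] at key
    have hd : (2 : ℤ) ∣ (σ₁ 0 * σ₂ 1 - σ₁ 1 * σ₂ 0) - n := Int.ModEq.dvd key
    rcases h1 with rfl | rfl | rfl <;> rcases h2 with rfl | rfl | rfl <;>
      simp only [Matrix.cons_val_zero, Matrix.cons_val_one, Matrix.head_cons] at hd <;>
      [ (exact Or.inl ⟨by omega, rfl⟩);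
        (refine Or.inr ⟨by omega, fun h => by have := congrFun h 0; simp at this⟩);
        (refine Or.inr ⟨by omega, fun h => by have := congrFun h 0; simp at this⟩);
        (refine Or.inr ⟨by omega, fun h => by have := congrFun h 0; simp at this⟩);
        (exact Or.inl ⟨by omega, rfl⟩);
        (refine Or.inr ⟨by omega, fun h => by have := congrFun h 1; simp at this⟩);
        (refine Or.inr ⟨by omega, fun h => by have := congrFun h 0; simp at this⟩);
        (refine Or.inr ⟨by omega, fun h => by have := congrFun h 1; simp at this⟩);
        (exact Or.inl ⟨by omega, rfl⟩) ]
  · rintro (⟨he, rfl⟩ | ⟨ho, hne⟩)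
    · obtain ⟨m, rfl⟩ := he
      rcases h1 with rfl | rfl | rfl
      · exact ⟨![0, 1], ![-(2*m), 1], by decide,
          gcd_one_of_comb _ _ (-1) (1 - 2*m) (by simp only [Matrix.cons_val_zero, Matrix.cons_val_one, Matrix.head_cons]; ring),
          fun i => by fin_cases i <;> rfl,
          fun i => by fin_cases i <;> simp [Int.ModEq] <;> try omega, by simp only [Matrix.cons_val_zero, Matrix.cons_val_one, Matrix.head_cons]; ring⟩
      · exact ⟨![1, 0], ![1, 2*m], by decide,
          gcd_one_of_comb _ _ 1 0 (by simp only [Matrix.cons_val_zero, Matrix.cons_val_one, Matrix.head_cons]; ring),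
          fun i => by fin_cases i <;> rfl,
          fun i => by fin_cases i <;> simp [Int.ModEq] <;> try omega, by simp only [Matrix.cons_val_zero, Matrix.cons_val_one, Matrix.head_cons]; ring⟩
      · exact ⟨![1, 1], ![1, 2*m+1], by decide,
          gcd_one_of_comb _ _ 1 0 (by simp only [Matrix.cons_val_zero, Matrix.cons_val_one, Matrix.head_cons]; ring),
          fun i => by fin_cases i <;> rfl,
          fun i => by fin_cases i <;> simp [Int.ModEq] <;> try omega, by simp only [Matrix.cons_val_zero, Matrix.cons_val_one, Matrix.head_cons]; ring⟩
    · rcases h1 with rfl | rfl | rfl <;> rcases h2 with rfl | rfl | rfl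
      · exact absurd rfl hne
      · exact ⟨![0, 1], ![-n, n-1], by decide,
          gcd_one_of_comb _ _ (-1) (-1) (by simp only [Matrix.cons_val_zero, Matrix.cons_val_one, Matrix.head_cons]; ring),
          fun i => by fin_cases i <;> rfl,
          fun i => by fin_cases i <;> simp [Int.ModEq] <;> try omega, by simp only [Matrix.cons_val_zero, Matrix.cons_val_one, Matrix.head_cons]; ring⟩
      · exact ⟨![0, 1], ![-n, 1], by decide,
          gcd_one_of_comb _ _ (-1) (1 - n) (by simp only [Matrix.cons_val_zero, Matrix.cons_val_one, Matrix.head_cons]; ring),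
          fun i => by fin_cases i <;> rfl,
          fun i => by fin_cases i <;> simp [Int.ModEq] <;> try omega, by simp only [Matrix.cons_val_zero, Matrix.cons_val_one, Matrix.head_cons]; ring⟩
      · exact ⟨![1, 0], ![n+1, n], by decide,
          gcd_one_of_comb _ _ 1 (-1) (by simp only [Matrix.cons_val_zero, Matrix.cons_val_one, Matrix.head_cons]; ring),
          fun i => by fin_cases i <;> rfl,
          fun i => by fin_cases i <;> simp [Int.ModEq] <;> try omega, by simp only [Matrix.cons_val_zero, Matrix.cons_val_one, Matrix.head_cons]; ring⟩
      · exact absurd rfl hne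
      · exact ⟨![1, 0], ![1, n], by decide,
          gcd_one_of_comb _ _ 1 0 (by simp only [Matrix.cons_val_zero, Matrix.cons_val_one, Matrix.head_cons]; ring),
          fun i => by fin_cases i <;> rfl,
          fun i => by fin_cases i <;> simp [Int.ModEq] <;> try omega, by simp only [Matrix.cons_val_zero, Matrix.cons_val_one, Matrix.head_cons]; ring⟩
      · exact ⟨![1, 1], ![n+1, 2*n+1], by decide,
          gcd_one_of_comb _ _ 2 (-1) (by simp only [Matrix.cons_val_zero, Matrix.cons_val_one, Matrix.head_cons]; ring),
          fun i => by fin_cases i <;> rfl,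
          fun i => by fin_cases i <;> simp [Int.ModEq] <;> try omega, by simp only [Matrix.cons_val_zero, Matrix.cons_val_one, Matrix.head_cons]; ring⟩
      · exact ⟨![1, 1], ![1, n+1], by decide,
          gcd_one_of_comb _ _ 1 0 (by simp only [Matrix.cons_val_zero, Matrix.cons_val_one, Matrix.head_cons]; ring),
          fun i => by fin_cases i <;> rfl,
          fun i => by fin_cases i <;> simp [Int.ModEq] <;> try omega, by simp only [Matrix.cons_val_zero, Matrix.cons_val_one, Matrix.head_cons]; ring⟩
      · exact absurd rfl hne
end

section
/- Let N ≥ 1, m ≥ 1, d = gcd(N, m) with 1 < d < m, and m' = m/d. The map ψ sending ℓ ∈ S_N(m) = {1 ≤ ℓ ≤ Nm : ℓ ≡ 1 (mod N), gcd(ℓ, m) = 1} to its residue in S_d(m') = {1 ≤ u ≤ dm' : u ≡ 1 (mod d), gcd(u, m') = 1} given by reduction modulo m = dm' is a well-defined surjective d-to-1 map; in particular |S_N(m)| = d·|S_d(m')|. -/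
/-- `S_N(m) = {1 ≤ ℓ ≤ Nm : ℓ ≡ 1 (mod N), gcd(ℓ, m) = 1}`. -/
def SNm' (N m : ℕ) : Finset ℕ :=
  (Finset.Icc 1 (N * m)).filter (fun ℓ => ℓ ≡ 1 [MOD N] ∧ Nat.gcd ℓ m = 1)

lemma modEq_lcm_aux {n m a b : ℕ} (h1 : a ≡ b [MOD n]) (h2 : a ≡ b [MOD m]) :
    a ≡ b [MOD Nat.lcm n m] := by
  rw [Nat.modEq_iff_dvd] at h1 h2 ⊢
  have := Int.coe_lcm_dvd h1 h2
  simpa [Int.lcm, Int.natAbs_natCast] using this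

lemma count_mod_aux (L d r : ℕ) (hr1 : 1 ≤ r) (hrL : r < L) :
    ((Finset.Icc 1 (d * L)).filter (fun ℓ => ℓ % L = r)).card = d := by
  have hL0 : 0 < L := lt_of_le_of_lt (Nat.zero_le r) hrL
  apply Finset.card_eq_of_bijective (fun k _ => r + L * k)
  · intro ℓ hℓ
    simp only [Finset.mem_filter, Finset.mem_Icc] at hℓ
    obtain ⟨⟨h1, h2⟩, h3⟩ := hℓ
    refine ⟨ℓ / L, ?_, ?_⟩
    · by_contra hcon
      push_neg at hcon
      have h4 := Nat.mod_add_div ℓ L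
      have h5 : L * d ≤ L * (ℓ / L) := Nat.mul_le_mul_left L hcon
      have h6 : d * L = L * d := Nat.mul_comm d L
      omega
    · have h4 := Nat.mod_add_div ℓ L
      omega
  · intro k hk
    simp only [Finset.mem_filter, Finset.mem_Icc]
    refine ⟨⟨by omega, ?_⟩, ?_⟩
    · have h1 : L * (k + 1) ≤ L * d := Nat.mul_le_mul_left L (by omega)
      have h2 : L * (k + 1) = L * k + L := by ring
      have h3 : d * L = L * d := Nat.mul_comm d L
      omega
    · simp [Nat.add_mul_mod_self_left, Nat.mod_eq_of_lt hrL]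
  · intro k1 k2 hk1 hk2 heq
    have h1 : L * k1 = L * k2 := by omega
    exact Nat.eq_of_mul_eq_mul_left hL0 h1

/-- With `d = gcd(N,m)`, `1 < d < m`, `m' = m/d`, reduction mod `m` is a well-defined
surjective `d`-to-1 map from `S_N(m)` onto `S_d(m')`; in particular
`|S_N(m)| = d·|S_d(m')|`. -/
theorem stmt17 (N m d m' : ℕ) (hN : 1 ≤ N) (hm : 1 ≤ m)
    (hd : d = Nat.gcd N m) (hd1 : 1 < d) (hdm : d < m) (hm' : m' = m / d) :
    (∀ ℓ ∈ SNm' N m, ℓ % m ∈ SNm' d m') ∧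
    (∀ u ∈ SNm' d m', ((SNm' N m).filter (fun ℓ => ℓ % m = u % m)).card = d) ∧
    (SNm' N m).card = d * (SNm' d m').card := by
  have hdN : d ∣ N := hd ▸ Nat.gcd_dvd_left N m
  have hdm0 : d ∣ m := hd ▸ Nat.gcd_dvd_right N m
  have hmd : m = d * m' := by rw [hm', Nat.mul_div_cancel' hdm0]
  have hm'1 : 1 < m' := by
    rcases Nat.lt_or_ge m' 2 with h | h
    · have h2 : m' = 0 ∨ m' = 1 := by omega
      rcases h2 with rfl | rfl <;> simp at hmd <;> omega
    · omega
  have hm1 : 1 < m := by omega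
  have hL : Nat.lcm N m = N * m' := by
    have h1 : d * Nat.lcm N m = N * m := by
      rw [hd]; exact Nat.gcd_mul_lcm N m
    have h2 : N * m = d * (N * m') := by rw [hmd]; ring
    have : d * Nat.lcm N m = d * (N * m') := by omega
    exact Nat.eq_of_mul_eq_mul_left (by omega) this
  have hNm : N * m = d * (N * m') := by rw [hmd]; ring
  have hL0 : 0 < N * m' := by positivity
  have hmdvdL : m ∣ N * m' := by
    rw [hmd]; exact Nat.mul_dvd_mul hdN dvd_rfl
  have hNdvdL : N ∣ N * m' := dvd_mul_right N m'
  -- membership facts for `u ∈ SNm' d m'`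
  have hu_facts : ∀ u ∈ SNm' d m',
      1 ≤ u ∧ u < m ∧ u ≡ 1 [MOD d] ∧ Nat.gcd u m = 1 := by
    intro u hu
    simp only [SNm', Finset.mem_filter, Finset.mem_Icc] at hu
    obtain ⟨⟨h1, h2⟩, h3, h4⟩ := hu
    have hud : Nat.gcd u d = 1 := by
      have : Nat.gcd d u = Nat.gcd (u % d) d := Nat.gcd_rec d u
      rw [Nat.gcd_comm u d, this, h3, Nat.one_mod_eq_one.mpr (by omega)]
      simp
    have hum : Nat.gcd u m = 1 := by
      rw [hmd]
      exact Nat.Coprime.mul_right hud h4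
    have hulm : u < m := by
      rcases Nat.lt_or_ge u m with h | h
      · exact h
      · have : u = m := by omega
        rw [this, Nat.gcd_self] at hum; omega
    exact ⟨h1, hulm, h3, hum⟩
  -- Part 1
  have part1 : ∀ ℓ ∈ SNm' N m, ℓ % m ∈ SNm' d m' := by
    intro ℓ hℓ
    simp only [SNm', Finset.mem_filter, Finset.mem_Icc] at hℓ ⊢
    obtain ⟨⟨h1, h2⟩, h3, h4⟩ := hℓ
    have hmod_ne : ℓ % m ≠ 0 := by
      intro h0
      have : m ∣ ℓ := Nat.dvd_of_mod_eq_zero h0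
      have : Nat.gcd ℓ m = m := Nat.gcd_eq_right this
      omega
    refine ⟨⟨by omega, ?_⟩, ?_, ?_⟩
    · have := Nat.mod_lt ℓ (show 0 < m by omega)
      omega
    · have hd3 : ℓ ≡ 1 [MOD d] := Nat.ModEq.of_dvd hdN h3
      have : ℓ % m ≡ ℓ [MOD d] := Nat.ModEq.of_dvd hdm0 (Nat.mod_modEq ℓ m)
      exact this.trans hd3
    · have hg : Nat.gcd (ℓ % m) m = 1 := by
        rw [← Nat.gcd_rec, Nat.gcd_comm]; exact h4
      exact Nat.Coprime.coprime_dvd_right ⟨d, by rw [hmd, Nat.mul_comm]⟩ hg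
  -- Part 2
  have part2 : ∀ u ∈ SNm' d m',
      ((SNm' N m).filter (fun ℓ => ℓ % m = u % m)).card = d := by
    intro u hu
    obtain ⟨hu1, hulm, hu3, hum⟩ := hu_facts u hu
    have humod : u % m = u := Nat.mod_eq_of_lt hulm
    have hcrt : (1 : ℕ) ≡ u [MOD Nat.gcd N m] := by
      rw [← hd]; exact hu3.symm
    obtain ⟨c, hc1, hc2⟩ := Nat.chineseRemainder' hcrt
    set L := N * m' with hLdef
    set r := c % L with hrdef
    have hcm : c % m = u := by
      have : c % m = u % m := hc2
      omega
    have hrm : r % m = u := by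
      have : r % m = c % m := Nat.mod_mod_of_dvd c hmdvdL
      omega
    have hr1 : 1 ≤ r := by
      by_contra h
      have : r = 0 := by omega
      rw [this] at hrm
      simp at hrm; omega
    have hrL : r < L := Nat.mod_lt c hL0
    have hset : (SNm' N m).filter (fun ℓ => ℓ % m = u % m)
        = (Finset.Icc 1 (d * L)).filter (fun ℓ => ℓ % L = r) := by
      ext ℓ
      simp only [SNm', Finset.mem_filter, Finset.mem_Icc, Finset.filter_filter]
      constructor
      · rintro ⟨⟨h1, h2⟩, ⟨h3, h4⟩, h5⟩
        have hℓN : ℓ ≡ c [MOD N] := h3.trans hc1.symm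
        have hℓm : ℓ ≡ c [MOD m] := by
          have : ℓ ≡ u [MOD m] := by unfold Nat.ModEq; omega
          exact this.trans hc2.symm
        have hlcm : ℓ ≡ c [MOD L] := by
          rw [← hL]; exact modEq_lcm_aux hℓN hℓm
        exact ⟨⟨by omega, by omega⟩, hlcm⟩
      · rintro ⟨⟨h1, h2⟩, h3⟩
        have hℓN : ℓ ≡ c [MOD N] := Nat.ModEq.of_dvd hNdvdL h3
        have hℓm : ℓ ≡ c [MOD m] := Nat.ModEq.of_dvd hmdvdL h3
        have hℓ1 : ℓ ≡ 1 [MOD N] := hℓN.trans hc1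
        have hℓu : ℓ % m = u := by
          have : ℓ % m = c % m := hℓm
          omega
        have hgcd : Nat.gcd ℓ m = 1 := by
          have : Nat.gcd (ℓ % m) m = Nat.gcd ℓ m := by
            rw [← Nat.gcd_rec, Nat.gcd_comm]
          rw [← this, hℓu]; exact hum
        exact ⟨⟨h1, by omega⟩, ⟨hℓ1, hgcd⟩, by omega⟩
    rw [hset]
    exact count_mod_aux L d r hr1 hrL
  refine ⟨part1, part2, ?_⟩
  have hsum := Finset.card_eq_sum_card_fiberwise part1
  rw [hsum]
  have : ∀ u ∈ SNm' d m',
      ((SNm' N m).filter (fun ℓ => ℓ % m = u)).card = d := by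
    intro u hu
    obtain ⟨hu1, hulm, _, _⟩ := hu_facts u hu
    have humod : u % m = u := Nat.mod_eq_of_lt hulm
    rw [← humod] at *
    exact part2 u hu
  rw [Finset.sum_congr rfl this, Finset.sum_const, smul_eq_mul, mul_comm]
end
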